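/- In a perfect-fluid spacetime (Ricci tensor R_{ij} = A g_{ij} + B u_i u_j with B ≠ 0, u unit timelike), the expansion scalar satisfies (n−2)\dot A + \dot B = −2θB, i.e., θ = −(1/(2B)) u^k ∇_k[(n−2)A + B]. -/

import Mathlib

open Finset

theorem expansion_from_Bianchi
    (M : Type*) (n : ℕ)
    (g ginv : M → Fin n → Fin n → ℝ)
    (u : M → Fin n → ℝ)
    -- Du x k l  represents  ∇_k u_l
    (Du : M → Fin n → Fin n → ℝ)
    (uup : M → Fin n → ℝ)
    (huup : ∀ x i, uup x i = ∑ j, ginv x i j * u x j)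
    -- u is unit timelike : u_k u^k = -1
    (hunit : ∀ x, ∑ k, uup x k * u x k = -1)
    -- consequence of metric compatibility and u_k u^k = -1 : u^j ∇_k u_j = 0
    (hDnorm : ∀ x k, ∑ j, uup x j * Du x k j = 0)
    (hn : 3 ≤ n)
    -- expansion scalar θ = ∇_k u^k
    (θ : M → ℝ) (hθ : ∀ x, θ x = ∑ k, ∑ l, ginv x k l * Du x k l)
    -- acceleration  \dot u_k = u^m ∇_m u_k
    (acc : M → Fin n → ℝ) (hacc : ∀ x k, acc x k = ∑ m, uup x m * Du x m k)
    -- perfect-fluid (quasi-Einstein) Ricci tensor : R_{ij} = A g_{ij} + B u_i u_j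
    (A B : M → ℝ) (hB : ∀ x, B x ≠ 0)
    -- gradients of the scalars A, B
    (DA DB : M → Fin n → ℝ)
    -- contracted second Bianchi identity ∇^j R_{ij} = (1/2) ∇_i R for
    -- R_{ij} = A g_{ij} + B u_i u_j, R = n A - B (divergence expanded by Leibniz)
    (hBianchi : ∀ x i, DA x i + (∑ j, uup x j * DB x j) * u x i
        + B x * (θ x * u x i + acc x i) = (1/2) * ((n:ℝ) * DA x i - DB x i)) :
    ∀ x, ((n:ℝ) - 2) * (∑ k, uup x k * DA x k) + (∑ k, uup x k * DB x k)
        = -2 * θ x * B x ∧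
      θ x = -(1/(2 * B x)) * ∑ k, uup x k * (((n:ℝ) - 2) * DA x k + DB x k) := by
  intro x
  set a := ∑ k, uup x k * DA x k with ha
  set b := ∑ k, uup x k * DB x k with hb
  have hacc0 : ∑ i, uup x i * acc x i = 0 := by
    simp only [hacc, Finset.mul_sum]
    rw [Finset.sum_comm]
    have : ∀ m ∈ Finset.univ, ∑ i, uup x i * (uup x m * Du x m i) = 0 := by
      intro m _
      have h := hDnorm x m
      calc ∑ i, uup x i * (uup x m * Du x m i)
          = uup x m * ∑ i, uup x i * Du x m i := by
            rw [Finset.mul_sum]; apply Finset.sum_congr rfl; intro i _; ring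
        _ = 0 := by rw [h]; ring
    rw [Finset.sum_congr rfl this, Finset.sum_const, smul_zero]
  have h1 : ∑ i, uup x i * (DA x i + b * u x i + B x * (θ x * u x i + acc x i))
      = ∑ i, uup x i * ((1/2) * ((n:ℝ) * DA x i - DB x i)) := by
    apply Finset.sum_congr rfl; intro i _; rw [hBianchi x i]
  have h2 : ∑ i, uup x i * (DA x i + b * u x i + B x * (θ x * u x i + acc x i))
      = a + (b + B x * θ x) * (∑ i, uup x i * u x i)
        + B x * (∑ i, uup x i * acc x i) := by
    rw [show (∑ i, uup x i * (DA x i + b * u x i + B x * (θ x * u x i + acc x i)))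
        = ∑ i, (uup x i * DA x i + (b + B x * θ x) * (uup x i * u x i)
            + B x * (uup x i * acc x i)) from
      Finset.sum_congr rfl fun i _ => by ring]
    rw [Finset.sum_add_distrib, Finset.sum_add_distrib, ← Finset.mul_sum,
      ← Finset.mul_sum, ← ha]
  have h3 : ∑ i, uup x i * ((1/2) * ((n:ℝ) * DA x i - DB x i))
      = ((n:ℝ)/2) * a - (1/2) * b := by
    rw [show (∑ i, uup x i * ((1/2) * ((n:ℝ) * DA x i - DB x i)))
        = ∑ i, (((n:ℝ)/2) * (uup x i * DA x i) - (1/2) * (uup x i * DB x i)) from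
      Finset.sum_congr rfl fun i _ => by ring]
    rw [Finset.sum_sub_distrib, ← Finset.mul_sum, ← Finset.mul_sum, ← ha, ← hb]
  have hsum : a + (b + B x * θ x) * (-1) + B x * 0 = ((n:ℝ)/2) * a - (1/2) * b := by
    rw [← hunit x, ← hacc0, ← h2, h1, h3]
  have key : ((n:ℝ) - 2) * a + b = -2 * θ x * B x := by linarith
  refine ⟨key, ?_⟩
  have hsplit : ∑ k, uup x k * (((n:ℝ) - 2) * DA x k + DB x k)
      = ((n:ℝ) - 2) * a + b := by
    rw [show (∑ k, uup x k * (((n:ℝ) - 2) * DA x k + DB x k))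
        = ∑ k, (((n:ℝ) - 2) * (uup x k * DA x k) + uup x k * DB x k) from
      Finset.sum_congr rfl fun k _ => by ring]
    rw [Finset.sum_add_distrib, ← Finset.mul_sum, ← ha, ← hb]
  rw [hsplit, key]
  have h2B : (2 : ℝ) * B x ≠ 0 := mul_ne_zero two_ne_zero (hB x)
  field_simp
  rw [mul_div_cancel_right₀ _ (hB x)]
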